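/- Let t : ℕ → ℕ be the Thue–Morse sequence, t(n) = s₂(n) mod 2 where s₂(n) is the sum of the binary digits of n. For every l ≥ 1, every factor of t of length at most 2ˡ + 1 occurs in t at some starting position at most 9·2^{l−1}; that is, if w has length L ≤ 2ˡ + 1 and there exists n₀ with t(n₀ + i) = w(i) for all i < L, then there exists n₁ ≤ 9·2^{l−1} with t(n₁ + i) = w(i) for all i < L. -/

import Mathlib

/-- The Thue–Morse sequence: sum of binary digits mod 2. -/
def thueMorse (n : ℕ) : ℕ := (Nat.digits 2 n).sum % 2

lemma thueMorse_split {k j q : ℕ} (hj : j < 2 ^ k) :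
    thueMorse (j + 2 ^ k * q) = (thueMorse j + thueMorse q) % 2 := by
  rcases Nat.eq_zero_or_pos q with rfl | hq
  · simp [thueMorse]
  have hlen : (Nat.digits 2 j).length ≤ k := by
    rcases Nat.eq_zero_or_pos j with rfl | hj0
    · simp
    rw [Nat.digits_len 2 j (by norm_num) hj0.ne']
    have := Nat.log_lt_of_lt_pow hj0.ne' hj
    omega
  have := Nat.digits_append_zeroes_append_digits
    (b := 2) (k := k - (Nat.digits 2 j).length) (m := q) (n := j) (by norm_num) hq
  rw [Nat.add_sub_cancel' hlen] at this
  unfold thueMorse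
  rw [← this]
  simp [Nat.add_mod]

lemma thueMorse_lt_two (n : ℕ) : thueMorse n < 2 := Nat.mod_lt _ (by norm_num)

lemma thueMorse_two_mul (n : ℕ) : thueMorse (2 * n) = thueMorse n := by
  have := thueMorse_split (k := 1) (j := 0) (q := n) (by norm_num)
  simpa [thueMorse] using this

lemma thueMorse_two_mul_add_one (n : ℕ) :
    thueMorse (2 * n + 1) = (1 + thueMorse n) % 2 := by
  have := thueMorse_split (k := 1) (j := 1) (q := n) (by norm_num)
  rw [add_comm] at this
  simpa [thueMorse] using this

lemma tm0 : thueMorse 0 = 0 := by simp [thueMorse]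
lemma tm1 : thueMorse 1 = 1 := by simpa [tm0] using thueMorse_two_mul_add_one 0
lemma tm2 : thueMorse 2 = 1 := by simpa [tm1] using thueMorse_two_mul 1
lemma tm3 : thueMorse 3 = 0 := by simpa [tm1] using thueMorse_two_mul_add_one 1
lemma tm4 : thueMorse 4 = 1 := by simpa [tm2] using thueMorse_two_mul 2
lemma tm5 : thueMorse 5 = 0 := by simpa [tm2] using thueMorse_two_mul_add_one 2
lemma tm6 : thueMorse 6 = 0 := by simpa [tm3] using thueMorse_two_mul 3
lemma tm7 : thueMorse 7 = 1 := by simpa [tm3] using thueMorse_two_mul_add_one 3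

/-- No three consecutive equal values in Thue–Morse. -/
lemma thueMorse_not_const (q : ℕ) :
    ¬ (thueMorse q = thueMorse (q + 1) ∧ thueMorse (q + 1) = thueMorse (q + 2)) := by
  rintro ⟨h1, h2⟩
  rcases Nat.even_or_odd q with ⟨m, hm⟩ | ⟨m, hm⟩
  · subst hm
    rw [show m + m = 2 * m by ring] at h1
    rw [thueMorse_two_mul, thueMorse_two_mul_add_one] at h1
    have := thueMorse_lt_two m
    omega
  · subst hm
    have e1 : thueMorse (2 * m + 1 + 1) = thueMorse (m + 1) := by
      rw [show 2 * m + 1 + 1 = 2 * (m + 1) by ring, thueMorse_two_mul]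
    have e2 : thueMorse (2 * m + 1 + 2) = (1 + thueMorse (m + 1)) % 2 := by
      rw [show 2 * m + 1 + 2 = 2 * (m + 1) + 1 by ring, thueMorse_two_mul_add_one]
    rw [e1] at h1 h2
    rw [e2] at h2
    have := thueMorse_lt_two (m + 1)
    omega

/-- Every non-constant triple of values occurs in Thue–Morse at position ≤ 5. -/
lemma triple_occurs (q : ℕ) : ∃ q' ≤ 5, thueMorse q' = thueMorse q ∧
    thueMorse (q' + 1) = thueMorse (q + 1) ∧ thueMorse (q' + 2) = thueMorse (q + 2) := by
  have h0 := thueMorse_lt_two q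
  have h1 := thueMorse_lt_two (q + 1)
  have h2 := thueMorse_lt_two (q + 2)
  have hnc := thueMorse_not_const q
  interval_cases ha : (thueMorse q) <;> interval_cases hb : (thueMorse (q+1)) <;>
    interval_cases hc : (thueMorse (q+2))
  · exact absurd ⟨by omega, by omega⟩ hnc
  · exact ⟨5, by norm_num, by simpa [tm5] using ha.symm, by simpa [tm6] using hb.symm,
      by simpa [tm7] using hc.symm⟩
  · exact ⟨3, by norm_num, by simpa [tm3] using ha.symm, by simpa [tm4] using hb.symm,
      by simpa [tm5] using hc.symm⟩
  · exact ⟨0, by norm_num, by simpa [tm0] using ha.symm, by simpa [tm1] using hb.symm,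
      by simpa [tm2] using hc.symm⟩
  · exact ⟨4, by norm_num, by simpa [tm4] using ha.symm, by simpa [tm5] using hb.symm,
      by simpa [tm6] using hc.symm⟩
  · exact ⟨2, by norm_num, by simpa [tm2] using ha.symm, by simpa [tm3] using hb.symm,
      by simpa [tm4] using hc.symm⟩
  · exact ⟨1, by norm_num, by simpa [tm1] using ha.symm, by simpa [tm2] using hb.symm,
      by simpa [tm3] using hc.symm⟩
  · exact absurd ⟨by omega, by omega⟩ hnc

lemma shift_factor (k n₀ L : ℕ) (hL : L ≤ 2 * 2 ^ k + 1) :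
    ∃ n₁ ≤ 6 * 2 ^ k, ∀ i < L, thueMorse (n₁ + i) = thueMorse (n₀ + i) := by
  have hmpos : 0 < 2 ^ k := Nat.pow_pos (by norm_num)
  obtain ⟨q', hq'le, he0, he1, he2⟩ := triple_occurs (n₀ / 2 ^ k)
  have hdm := Nat.div_add_mod n₀ (2 ^ k)
  have hrm : n₀ % 2 ^ k < 2 ^ k := Nat.mod_lt _ hmpos
  refine ⟨2 ^ k * q' + n₀ % 2 ^ k, ?_, ?_⟩
  · have : 2 ^ k * q' ≤ 2 ^ k * 5 := Nat.mul_le_mul_left _ hq'le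
    omega
  · intro i hi
    have hri : n₀ % 2 ^ k + i < 3 * 2 ^ k := by omega
    have hdm2 := Nat.div_add_mod (n₀ % 2 ^ k + i) (2 ^ k)
    have hbm : (n₀ % 2 ^ k + i) % 2 ^ k < 2 ^ k := Nat.mod_lt _ hmpos
    set a := (n₀ % 2 ^ k + i) / 2 ^ k with ha
    set b := (n₀ % 2 ^ k + i) % 2 ^ k with hb
    have ha2 : a < 3 := by
      rw [ha]
      exact Nat.div_lt_of_lt_mul (by omega)
    have heq : thueMorse (q' + a) = thueMorse (n₀ / 2 ^ k + a) := by
      interval_cases a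
      · simpa using he0
      · exact he1
      · exact he2
    have h1 : 2 ^ k * q' + n₀ % 2 ^ k + i = b + 2 ^ k * (q' + a) := by
      rw [Nat.mul_add]; omega
    have h2 : n₀ + i = b + 2 ^ k * (n₀ / 2 ^ k + a) := by
      rw [Nat.mul_add]; omega
    rw [h1, h2, thueMorse_split hbm, thueMorse_split hbm, heq]

theorem thue_morse_factors_appear_early (l : ℕ) (hl : 1 ≤ l)
    (L : ℕ) (hL : L ≤ 2 ^ l + 1) (w : ℕ → ℕ)
    (h : ∃ n₀ : ℕ, ∀ i < L, thueMorse (n₀ + i) = w i) :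
    ∃ n₁ : ℕ, n₁ ≤ 9 * 2 ^ (l - 1) ∧ ∀ i < L, thueMorse (n₁ + i) = w i := by
  obtain ⟨n₀, hn₀⟩ := h
  have h2l : 2 ^ l = 2 * 2 ^ (l - 1) := by
    rw [← pow_succ']
    congr 1; omega
  obtain ⟨n₁, hn₁le, hn₁⟩ := shift_factor (l - 1) n₀ L (by omega)
  exact ⟨n₁, by omega, fun i hi => (hn₁ i hi).trans (hn₀ i hi)⟩
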